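/- For 0 < α < 1, the conformal module of the doubly-connected domain 𝔻 ∖ [−α, α] (the open unit disc minus the closed segment [−α,α] of the real axis) equals (1/2π)·log Φ(½(α + 1/α)). -/

import Mathlib

open Complex Set

set_option maxHeartbeats 1000000

/-- The round annulus {z : r < |z| < s}. -/
def Annulus (r s : ℝ) : Set ℂ :=
  {z : ℂ | r < ‖z‖ ∧ ‖z‖ < s}

/-- Conformal equivalence of planar domains: there is a holomorphic bijection. -/
def ConformallyEquiv (U V : Set ℂ) : Prop :=
  ∃ f : ℂ → ℂ, DifferentiableOn ℂ f U ∧ Set.BijOn f U V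

/-- The Grötzsch domain: ℂ minus the closed unit disc and the ray [R,∞). -/
def GrotzschDomain (R : ℝ) : Set ℂ :=
  {z : ℂ | 1 < ‖z‖} \ {z : ℂ | z.im = 0 ∧ R ≤ z.re}

/-- Φ is the Grötzsch modulus function: for each R > 1, Φ(R) > 1 and the
Grötzsch domain is conformally equivalent to the annulus {1 < |z| < Φ(R)}. -/
def IsGrotzschModulus (Φ : ℝ → ℝ) : Prop :=
  ∀ R : ℝ, 1 < R → 1 < Φ R ∧ ConformallyEquiv (GrotzschDomain R) (Annulus 1 (Φ R))

/-- A doubly-connected planar domain U has conformal module m if U is conformally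
equivalent to a round annulus {1 < |z| < ρ} with m = (1/2π)·log ρ. -/
def HasConformalModule (U : Set ℂ) (m : ℝ) : Prop :=
  ∃ ρ : ℝ, 1 < ρ ∧ ConformallyEquiv U (Annulus 1 ρ) ∧
    m = (1 / (2 * Real.pi)) * Real.log ρ

lemma slit_mem_iff (α : ℝ) (w : ℂ) :
    w ∈ (Metric.ball (0 : ℂ) 1 \ {z : ℂ | z.im = 0 ∧ -α ≤ z.re ∧ z.re ≤ α}) ↔
      (w.re ^ 2 + w.im ^ 2 < 1 ∧ ¬(w.im = 0 ∧ -α ≤ w.re ∧ w.re ≤ α)) := by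
  rw [Set.mem_diff, Metric.mem_ball, Complex.dist_eq, sub_zero, Set.mem_setOf_eq]
  constructor
  · rintro ⟨h1, h2⟩
    refine ⟨?_, h2⟩
    have h1' : ‖w‖ ^ 2 < 1 := by
      nlinarith [norm_nonneg w]
    rw [Complex.sq_norm, Complex.normSq_apply] at h1'
    nlinarith
  · rintro ⟨h1, h2⟩
    refine ⟨?_, h2⟩
    have h1' : ‖w‖ ^ 2 < 1 := by
      rw [Complex.sq_norm, Complex.normSq_apply]; nlinarith
    nlinarith [norm_nonneg w]

lemma grotzsch_mem_iff (R : ℝ) (z : ℂ) :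
    z ∈ GrotzschDomain R ↔ (1 < z.re ^ 2 + z.im ^ 2 ∧ ¬(z.im = 0 ∧ R ≤ z.re)) := by
  rw [GrotzschDomain, Set.mem_diff, Set.mem_setOf_eq, Set.mem_setOf_eq]
  constructor
  · rintro ⟨h1, h2⟩
    refine ⟨?_, h2⟩
    have h1' : 1 < ‖z‖ ^ 2 := by nlinarith [norm_nonneg z]
    rw [Complex.sq_norm, Complex.normSq_apply] at h1'
    nlinarith
  · rintro ⟨h1, h2⟩
    refine ⟨?_, h2⟩
    have h1' : 1 < ‖z‖ ^ 2 := by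
      rw [Complex.sq_norm, Complex.normSq_apply]; nlinarith
    nlinarith [norm_nonneg z]

/-- The Möbius-type map w ↦ (1+αw)/(w+α) maps the slit disc bijectively onto the
Grötzsch domain with parameter (α+1/α)/2. -/
lemma slit_disc_bijOn (α : ℝ) (hα0 : 0 < α) (hα1 : α < 1) :
    Set.BijOn (fun w : ℂ => (1 + (α:ℂ) * w) / (w + α))
      (Metric.ball (0 : ℂ) 1 \ {z : ℂ | z.im = 0 ∧ -α ≤ z.re ∧ z.re ≤ α})
      (GrotzschDomain ((1 / 2) * (α + 1 / α))) := by
  set R : ℝ := (1 / 2) * (α + 1 / α) with hRdef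
  have hα2 : α ^ 2 < 1 := by nlinarith
  have hαne : (1:ℝ) - α ^ 2 ≠ 0 := by nlinarith
  have hαneC : (1:ℂ) - (α:ℂ) ^ 2 ≠ 0 := by
    have h : ((1 - α^2 : ℝ) : ℂ) = 1 - (α:ℂ)^2 := by push_cast; ring
    rw [← h]
    exact Complex.ofReal_ne_zero.mpr hαne
  have hR2 : 2 * α * R = 1 + α ^ 2 := by
    rw [hRdef]; field_simp; ring
  -- nonvanishing of the denominator on the domain
  have hden : ∀ w : ℂ, w ∈ (Metric.ball (0 : ℂ) 1 \ {z : ℂ | z.im = 0 ∧ -α ≤ z.re ∧ z.re ≤ α}) →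
      w + (α:ℂ) ≠ 0 := by
    intro w hw hzero
    rw [slit_mem_iff] at hw
    have hre : w.re + α = 0 := by
      have := congrArg Complex.re hzero; simpa using this
    have him : w.im = 0 := by
      have := congrArg Complex.im hzero; simpa using this
    exact hw.2 ⟨him, by linarith, by linarith⟩
  constructor
  · -- MapsTo
    intro w hw
    have hdenw := hden w hw
    rw [slit_mem_iff] at hw
    obtain ⟨hw1, hw2⟩ := hw
    rw [grotzsch_mem_iff]
    set x := w.re with hx
    set y := w.im with hy
    have hNpos : 0 < (x + α) ^ 2 + y ^ 2 := by
      rcases lt_or_ge 0 ((x + α) ^ 2 + y ^ 2) with h | h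
      · exact h
      · exfalso
        have hx0 : x + α = 0 := by nlinarith [sq_nonneg (x+α), sq_nonneg y]
        have hy0 : y = 0 := by nlinarith [sq_nonneg (x+α), sq_nonneg y]
        exact hdenw (by apply Complex.ext <;> simp [← hx, ← hy, hx0, hy0])
    have hN : Complex.normSq (w + α) = (x + α) ^ 2 + y ^ 2 := by
      simp [Complex.normSq_apply]; ring
    have e1 : (1 + (α:ℂ)*w).re = 1 + α*x := by simp [hx]
    have e2 : (1 + (α:ℂ)*w).im = α*y := by simp [hy]
    have e3 : (w + (α:ℂ)).re = x + α := by simp [hx]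
    have e4 : (w + (α:ℂ)).im = y := by simp [hy]
    -- real and imaginary parts of f w
    have hre : ((1 + (α:ℂ) * w) / (w + α)).re =
        ((1 + α*x) * (x + α) + (α*y) * y) / ((x + α) ^ 2 + y ^ 2) := by
      rw [Complex.div_re, hN, e1, e2, e3, e4]; ring
    have him : ((1 + (α:ℂ) * w) / (w + α)).im =
        ((α*y) * (x + α) - (1 + α*x) * y) / ((x + α) ^ 2 + y ^ 2) := by
      rw [Complex.div_im, hN, e1, e2, e3, e4]; ring
    constructor
    · -- 1 < |f w|^2
      rw [hre, him, div_pow, div_pow, ← add_div,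
        lt_div_iff₀ (by positivity)]
      nlinarith [mul_pos (show (0:ℝ) < 1 - α^2 by nlinarith)
        (show (0:ℝ) < 1 - (x^2+y^2) by nlinarith), hNpos]
    · -- not on the ray
      rintro ⟨h1, h2⟩
      rw [him] at h1
      rw [hre] at h2
      have hy0 : y = 0 := by
        have h1' : (α*y) * (x + α) - (1 + α*x) * y = 0 := by
          rcases div_eq_zero_iff.mp h1 with h | h
          · exact h
          · exact absurd h (ne_of_gt hNpos)
        have : y * (1 - α^2) = 0 := by linear_combination -h1'
        rcases mul_eq_zero.mp this with h | h
        · exact h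
        · exact absurd h hαne
      rw [hy0] at h2 hw1 hNpos
      simp only [mul_zero, zero_mul, add_zero] at h2 hNpos
      have h2' : R * ((x + α) ^ 2) ≤ (1 + α*x) * (x + α) := by
        rw [le_div_iff₀ hNpos] at h2
        linarith
      have hx2 : x ^ 2 < 1 := by nlinarith
      have hxslit : ¬(-α ≤ x ∧ x ≤ α) := fun h => hw2 ⟨hy0, h.1, h.2⟩
      have h5 : (1 + α^2) * ((x + α)^2) ≤ 2*α*((1 + α*x) * (x + α)) := by
        calc (1 + α^2) * ((x + α)^2) = 2*α*(R * ((x + α)^2)) := by rw [← hR2]; ring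
          _ ≤ 2*α*((1 + α*x) * (x + α)) := by
              apply mul_le_mul_of_nonneg_left h2' (by linarith)
      have key : 2*α*((1 + α*x) * (x + α)) - (1 + α^2) * ((x + α)^2)
          = (1 - α^2) * ((x + α) * (α - x)) := by ring
      rcases lt_or_ge x (-α) with hc | hc
      · have hneg : (1 - α^2) * ((x + α) * (α - x)) < 0 := by
          apply mul_neg_of_pos_of_neg (by nlinarith)
          have := mul_pos (show (0:ℝ) < -(x + α) by linarith)
            (show (0:ℝ) < α - x by linarith)
          nlinarith
        linarith [h5, key, hneg]
      · have hc' : α < x := by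
          by_contra h
          push_neg at h
          exact hxslit ⟨hc, h⟩
        have hneg : (1 - α^2) * ((x + α) * (α - x)) < 0 := by
          apply mul_neg_of_pos_of_neg (by nlinarith)
          have := mul_pos (show (0:ℝ) < x + α by linarith)
            (show (0:ℝ) < x - α by linarith)
          nlinarith
        linarith [h5, key, hneg]
  constructor
  · -- InjOn
    intro w1 hw1 w2 hw2 heq
    have hd1 := hden w1 hw1
    have hd2 := hden w2 hw2
    simp only at heq
    rw [div_eq_div_iff hd1 hd2] at heq
    have : ((1:ℂ) - (α:ℂ)^2) * (w2 - w1) = 0 := by linear_combination heq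
    rcases mul_eq_zero.mp this with h | h
    · exact absurd h hαneC
    · exact (sub_eq_zero.mp h).symm
  · -- SurjOn
    intro z hz
    rw [grotzsch_mem_iff] at hz
    obtain ⟨hz1, hz2⟩ := hz
    set u := z.re with hu
    set v := z.im with hv
    have hzα : z - (α:ℂ) ≠ 0 := by
      intro h
      have h1 : u - α = 0 := by have := congrArg Complex.re h; simpa [← hu] using this
      have h2 : v = 0 := by have := congrArg Complex.im h; simpa [← hv] using this
      rw [show u = α by linarith] at hz1
      nlinarith [hz1]
    have hN : Complex.normSq (z - α) = (u - α)^2 + v^2 := by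
      simp [Complex.normSq_apply]; ring
    have hNpos : 0 < (u - α)^2 + v^2 := by
      have := Complex.normSq_pos.mpr hzα
      rw [hN] at this; exact this
    have e1 : ((1:ℂ) - (α:ℂ)*z).re = 1 - α*u := by simp [hu]
    have e2 : ((1:ℂ) - (α:ℂ)*z).im = -(α*v) := by simp [hv]
    have e3 : (z - (α:ℂ)).re = u - α := by simp [hu]
    have e4 : (z - (α:ℂ)).im = v := by simp [hv]
    have hwre : ((1 - (α:ℂ)*z)/(z - α)).re =
        ((1 - α*u) * (u - α) + (-(α*v)) * v) / ((u - α)^2 + v^2) := by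
      rw [Complex.div_re, hN, e1, e2, e3, e4]; ring
    have hwim : ((1 - (α:ℂ)*z)/(z - α)).im =
        ((-(α*v)) * (u - α) - (1 - α*u) * v) / ((u - α)^2 + v^2) := by
      rw [Complex.div_im, hN, e1, e2, e3, e4]; ring
    refine ⟨(1 - (α:ℂ)*z)/(z - α), ?_, ?_⟩
    · -- membership in slit disc
      rw [slit_mem_iff]
      constructor
      · -- |w|^2 < 1
        rw [hwre, hwim, div_pow, div_pow, ← add_div,
          div_lt_one (by positivity)]
        nlinarith [mul_pos (show (0:ℝ) < 1 - α^2 by nlinarith)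
          (show (0:ℝ) < (u^2+v^2) - 1 by nlinarith), hNpos]
      · -- not in the slit
        rintro ⟨h1, h2, h3⟩
        rw [hwim] at h1
        rw [hwre] at h2 h3
        have hv0 : v = 0 := by
          have h1' : (-(α*v)) * (u - α) - (1 - α*u) * v = 0 := by
            rcases div_eq_zero_iff.mp h1 with h | h
            · exact h
            · exact absurd h (ne_of_gt hNpos)
          have : v * (1 - α^2) = 0 := by linear_combination -h1'
          rcases mul_eq_zero.mp this with h | h
          · exact h
          · exact absurd h hαne
        rw [hv0] at h2 h3 hz1 hNpos
        simp only [mul_zero, neg_zero, zero_mul, add_zero] at h2 h3 hNpos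
        have hu2 : 1 < u^2 := by nlinarith
        have huR' : ¬ (R ≤ u) := by
          rcases not_and_or.mp hz2 with h | h
          · exact absurd hv0 h
          · exact h
        push_neg at huR'
        have h2' : -α * ((u - α)^2) ≤ (1 - α*u) * (u - α) := by
          rw [le_div_iff₀ hNpos] at h2
          linarith
        have h3' : (1 - α*u) * (u - α) ≤ α * ((u - α)^2) := by
          rw [div_le_iff₀ hNpos] at h3
          linarith
        rcases lt_or_ge u (-1) with hc | hc
        · nlinarith [h2', sq_nonneg (u - α)]
        · have hc' : 1 < u := by nlinarith
          nlinarith [h3', hR2, mul_pos hα0 (sub_pos.mpr hc')]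
    · -- f w = z
      have hwden : (1 - (α:ℂ)*z)/(z - α) + (α:ℂ) ≠ 0 := by
        rw [div_add' _ _ _ hzα]
        intro h
        rcases div_eq_zero_iff.mp h with h | h
        · exact hαneC (by linear_combination h)
        · exact hzα h
      simp only
      rw [div_eq_iff hwden]
      field_simp
      ring

/-- for 0 < α < 1, the conformal module of 𝔻 ∖ [−α,α] equals
(1/2π)·log Φ(½(α + 1/α)). -/
theorem module_of_slit_disc (Φ : ℝ → ℝ) (hΦ : IsGrotzschModulus Φ)
    (α : ℝ) (hα0 : 0 < α) (hα1 : α < 1) :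
    HasConformalModule
      (Metric.ball (0 : ℂ) 1 \ {z : ℂ | z.im = 0 ∧ -α ≤ z.re ∧ z.re ≤ α})
      ((1 / (2 * Real.pi)) * Real.log (Φ ((1 / 2) * (α + 1 / α)))) := by
  have hR1 : 1 < (1 / 2) * (α + 1 / α) := by
    have h : (1 / 2) * (α + 1 / α) - 1 = (α - 1)^2 / (2*α) := by
      field_simp; ring
    have h2 : (0:ℝ) < (α - 1)^2 := by
      have : α - 1 ≠ 0 := sub_ne_zero.mpr (ne_of_lt hα1)
      positivity
    nlinarith [div_pos h2 (by linarith : (0:ℝ) < 2*α)]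
  obtain ⟨hΦR, g, hgdiff, hgbij⟩ := hΦ _ hR1
  have hfbij := slit_disc_bijOn α hα0 hα1
  have hden : ∀ w : ℂ, w ∈ (Metric.ball (0 : ℂ) 1 \ {z : ℂ | z.im = 0 ∧ -α ≤ z.re ∧ z.re ≤ α}) →
      w + (α:ℂ) ≠ 0 := by
    intro w hw hzero
    rw [slit_mem_iff] at hw
    have hre : w.re + α = 0 := by
      have := congrArg Complex.re hzero; simpa using this
    have him : w.im = 0 := by
      have := congrArg Complex.im hzero; simpa using this
    exact hw.2 ⟨him, by linarith, by linarith⟩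
  have hfdiff : DifferentiableOn ℂ (fun w : ℂ => (1 + (α:ℂ) * w) / (w + α))
      (Metric.ball (0 : ℂ) 1 \ {z : ℂ | z.im = 0 ∧ -α ≤ z.re ∧ z.re ≤ α}) := by
    apply DifferentiableOn.div
    · exact ((differentiable_const _).add ((differentiable_const _).mul differentiable_id)).differentiableOn
    · exact (differentiable_id.add_const _).differentiableOn
    · exact hden
  refine ⟨Φ ((1 / 2) * (α + 1 / α)), hΦR,
    ⟨g ∘ (fun w : ℂ => (1 + (α:ℂ) * w) / (w + α)), ?_, hgbij.comp hfbij⟩, rfl⟩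
  exact hgdiff.comp hfdiff hfbij.mapsTo
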